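/- For every natural number m there exists a natural number O = O(m) with the following property: for every subgroup N of the special unitary group SU(m) (the group of m×m complex unitary matrices of determinant 1) such that N is nilpotent of nilpotency class s with s ≥ 2, the s-th term N_(s) of the lower central series of N is a commutative (abelian) subgroup, is finite, and has cardinality at most O. -/

import Mathlib

/-- The special unitary group `SU(m)` is a group (inverse given by conjugate transpose). -/
noncomputable instance (m : ℕ) : Group (Matrix.specialUnitaryGroup (Fin m) ℂ) where
  inv A := ⟨star A.1, by
    obtain ⟨h1, h2⟩ := Matrix.mem_specialUnitaryGroup_iff.mp A.2
    refine Matrix.mem_specialUnitaryGroup_iff.mpr ⟨Unitary.star_mem h1, ?_⟩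
    rw [Matrix.star_eq_conjTranspose, Matrix.det_conjTranspose, h2, star_one]⟩
  inv_mul_cancel A := by
    obtain ⟨h1, _⟩ := Matrix.mem_specialUnitaryGroup_iff.mp A.2
    exact Subtype.ext ((Unitary.mem_iff.mp h1).1)


section Auxiliary

open Polynomial Module Set


lemma det_smul_one_sub_matrix {n R : Type*} [Fintype n] [DecidableEq n] [CommRing R]
    (M : Matrix n n R) (r : R) :
    (r • (1 : Matrix n n R) - M).det = (M.charpoly).eval r := by
  rw [Matrix.charpoly, ← Polynomial.coe_evalRingHom, RingHom.map_det]
  congr 1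
  ext i j
  rcases eq_or_ne i j with rfl | h
  · simp [Matrix.charmatrix_apply_eq, Matrix.one_apply]
  · simp [Matrix.charmatrix_apply_ne _ _ _ h, Matrix.one_apply_ne h]

lemma det_smul_one_sub_end {K V : Type*} [Field K] [AddCommGroup V] [Module K V]
    [FiniteDimensional K V] (f : Module.End K V) (r : K) :
    LinearMap.det (r • (1 : Module.End K V) - f) = (LinearMap.charpoly f).eval r := by
  classical
  let b := Module.finBasis K V
  rw [← LinearMap.det_toMatrix b, ← LinearMap.charpoly_toMatrix f b, map_sub, map_smul,
    ← det_smul_one_sub_matrix]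
  congr 2
  ext i j
  simp [LinearMap.toMatrix_one]

lemma det_eq_pow_of_nilpotent_sub_smul_one {K V : Type*} [Field K] [AddCommGroup V] [Module K V]
    [FiniteDimensional K V] (f : Module.End K V) (r : K)
    (h : IsNilpotent (f - r • (1 : Module.End K V))) :
    LinearMap.det f = r ^ (Module.finrank K V) := by
  have h2 : IsNilpotent (r • (1 : Module.End K V) - f) := by
    rw [← neg_sub]; exact h.neg
  have h3 := IsNilpotent.charpoly_eq_X_pow_finrank (R := K) (M := V) h2
  have := det_smul_one_sub_end (r • (1 : Module.End K V) - f) r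
  rw [h3] at this
  simp only [eval_pow, eval_X] at this
  rw [← this]
  congr 1
  abel

lemma det_restrict_maxGen {K V : Type*} [Field K] [AddCommGroup V] [Module K V]
    [FiniteDimensional K V] (z : Module.End K V) (μ : K)
    (h : MapsTo z (z.maxGenEigenspace μ) (z.maxGenEigenspace μ)) :
    LinearMap.det (z.restrict h) = μ ^ (Module.finrank K (z.maxGenEigenspace μ)) := by
  apply det_eq_pow_of_nilpotent_sub_smul_one
  have hsub : MapsTo (z - algebraMap K (Module.End K V) μ)
      (z.maxGenEigenspace μ) (z.maxGenEigenspace μ) :=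
    Module.End.mapsTo_maxGenEigenspace_of_comm (Algebra.mul_sub_algebraMap_commutes z μ) μ
  have hnil := Module.End.isNilpotent_restrict_maxGenEigenspace_sub_algebraMap z μ hsub
  have halg : MapsTo (algebraMap K (Module.End K V) μ)
      (z.maxGenEigenspace μ) (z.maxGenEigenspace μ) := by
    intro x hx
    rw [Module.algebraMap_end_eq_smul_id]
    exact (z.maxGenEigenspace μ).smul_mem μ hx
  have : z.restrict h - μ • (1 : Module.End K (z.maxGenEigenspace μ)) =
      (z - algebraMap K (Module.End K V) μ).restrict hsub := by
    rw [← LinearMap.restrict_sub h halg]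
    ext v
    simp [Module.algebraMap_end_eq_smul_id, LinearMap.restrict_apply]
  rw [this]
  exact hnil

lemma maxGen_smul_action {K V : Type*} [Field K] [AddCommGroup V] [Module K V]
    {z : Module.End K V} {L : ℕ} (hL : (L : K) ≠ 0) (hz : z ^ L = 1)
    {μ : K} {v : V} (hv : v ∈ z.maxGenEigenspace μ) : z v = μ • v := by
  classical
  obtain ⟨k, hk⟩ := (Module.End.mem_maxGenEigenspace z μ v).mp hv
  set p : K[X] := X ^ L - 1 with hp
  set q : K[X] := (X - C μ) ^ k with hq
  have haevalp : aeval z p = 0 := by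
    simp [hp, map_sub, map_pow, aeval_X, hz]
  have haevalq : (aeval z q) v = 0 := by
    have : aeval z q = (z - μ • 1) ^ k := by
      rw [hq, map_pow, map_sub, aeval_X, aeval_C, Module.algebraMap_end_eq_smul_id]
      rfl
    rw [this]
    exact hk
  set d : K[X] := EuclideanDomain.gcd p q with hd
  have hdv : (aeval z d) v = 0 := by
    rw [hd, EuclideanDomain.gcd_eq_gcd_ab p q]
    rw [mul_comm p _, mul_comm q _, map_add, map_mul, map_mul]
    simp only [LinearMap.add_apply, Module.End.mul_apply, haevalq, map_zero]
    rw [haevalp]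
    simp
  have hpsf : Squarefree p := by
    have hsep : Separable p := by
      have := separable_X_pow_sub_C (F := K) (1 : K) hL one_ne_zero
      simpa [hp, map_one] using this
    exact hsep.squarefree
  have hdq : d ∣ q := EuclideanDomain.gcd_dvd_right p q
  have hdp : d ∣ p := EuclideanDomain.gcd_dvd_left p q
  obtain ⟨i, hik, hassoc⟩ := (dvd_prime_pow (prime_X_sub_C μ) k).mp (hq ▸ hdq)
  match i, hassoc with
  | 0, hassoc =>
    -- d is a unit, so v = 0
    have hunit : IsUnit d := by
      obtain ⟨u, hu⟩ := hassoc
      rw [pow_zero] at hu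
      exact IsUnit.of_mul_eq_one u hu
    obtain ⟨c, hcunit, hc⟩ := Polynomial.isUnit_iff.mp hunit
    have hv0 : v = 0 := by
      have : (aeval z d) v = c • v := by
        rw [← hc, aeval_C, Module.algebraMap_end_eq_smul_id]
        rfl
      have h0 : c • v = 0 := this.symm.trans hdv
      rcases smul_eq_zero.mp h0 with h | h
      · exact absurd h hcunit.ne_zero
      · exact h
    rw [hv0]
    simp
  | 1, hassoc =>
    obtain ⟨u, hu⟩ := hassoc
    rw [pow_one] at hu
    obtain ⟨c, hcunit, hc⟩ := Polynomial.isUnit_iff.mp u.isUnit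
    have key : (aeval z (X - C μ)) v = 0 := by
      rw [← hu, map_mul]
      have : (aeval z (u : K[X])) v = c • v := by
        rw [← hc, aeval_C, Module.algebraMap_end_eq_smul_id]
        rfl
      rw [Module.End.mul_apply, this, map_smul, hdv, smul_zero]
    have : z v - μ • v = 0 := by
      rw [map_sub, aeval_X, aeval_C, Module.algebraMap_end_eq_smul_id] at key
      exact key
    linear_combination (norm := module) this
  | (i+2), hassoc =>
    exfalso
    have h2 : (X - C μ) * (X - C μ) ∣ p := by
      refine dvd_trans ?_ hdp
      have : (X - C μ) ^ (i + 2) ∣ d := hassoc.symm.dvd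
      exact dvd_trans (by rw [← sq]; exact pow_dvd_pow _ (by omega)) this
    exact Polynomial.not_isUnit_X_sub_C μ (hpsf _ h2)

lemma spectrum_pow_eq_one_of_commutator {K V : Type*} [Field K] [AddCommGroup V] [Module K V]
    [FiniteDimensional K V] (f g z : Module.End K V)
    (hf : IsUnit f) (hg : IsUnit g) (hzf : Commute z f) (hzg : Commute z g)
    (hrel : g * f = z * (f * g)) {μ : K} (hμ : μ ∈ spectrum K z) :
    ∃ d : ℕ, 0 < d ∧ d ≤ Module.finrank K V ∧ μ ^ d = 1 := by
  classical
  have heig : Module.End.HasEigenvalue z μ := Module.End.hasEigenvalue_iff_mem_spectrum.mpr hμ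
  set W := z.maxGenEigenspace μ with hW
  have hWne : W ≠ ⊥ := by
    obtain ⟨v, hv⟩ := heig.exists_hasEigenvector
    have hvW : v ∈ W := by
      rw [hW, Module.End.mem_maxGenEigenspace]
      exact ⟨1, by simpa [Module.End.mem_eigenspace_iff.mp hv.1, sub_smul] using
        (by simp [Module.End.mem_eigenspace_iff.mp hv.1, sub_apply] :
          ((z - μ • 1 : Module.End K V) ^ 1) v = 0)⟩
    intro hbot
    exact hv.2 (by simpa [hbot] using hvW)
  have hFmap : MapsTo f W W := Module.End.mapsTo_maxGenEigenspace_of_comm hzf μ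
  have hGmap : MapsTo g W W := Module.End.mapsTo_maxGenEigenspace_of_comm hzg μ
  have hZmap : MapsTo z W W := Module.End.mapsTo_maxGenEigenspace_of_comm rfl μ
  set F := f.restrict hFmap
  set G := g.restrict hGmap
  set Z := z.restrict hZmap
  -- the relation restricted
  have hrel' : G * F = Z * (F * G) := by
    ext v
    have := congrArg (fun (φ : Module.End K V) => φ v.1) hrel
    simp only [F, G, Z, Module.End.mul_apply, LinearMap.restrict_apply]
    exact this
  -- determinants
  have hdetF : IsUnit (LinearMap.det F) := by
    apply LinearMap.isUnit_det
    rw [LinearMap.isUnit_iff_ker_eq_bot, LinearMap.ker_eq_bot]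
    intro v w hvw
    have : f v.1 = f w.1 := by
      have := congrArg Subtype.val hvw
      simp only [F, LinearMap.restrict_apply] at this
      exact this
    exact Subtype.ext (LinearMap.ker_eq_bot.mp ((LinearMap.isUnit_iff_ker_eq_bot f).mp hf) this)
  have hdetG : IsUnit (LinearMap.det G) := by
    apply LinearMap.isUnit_det
    rw [LinearMap.isUnit_iff_ker_eq_bot, LinearMap.ker_eq_bot]
    intro v w hvw
    have : g v.1 = g w.1 := by
      have := congrArg Subtype.val hvw
      simp only [G, LinearMap.restrict_apply] at this
      exact this
    exact Subtype.ext (LinearMap.ker_eq_bot.mp ((LinearMap.isUnit_iff_ker_eq_bot g).mp hg) this)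
  have hdet := congrArg LinearMap.det hrel'
  rw [map_mul, map_mul, map_mul] at hdet
  have hZdet : LinearMap.det Z = 1 := by
    have h1 : LinearMap.det G * LinearMap.det F =
        LinearMap.det Z * (LinearMap.det F * LinearMap.det G) := hdet
    have hne : LinearMap.det F * LinearMap.det G ≠ 0 :=
      mul_ne_zero hdetF.ne_zero hdetG.ne_zero
    rw [mul_comm (LinearMap.det G)] at h1
    nth_rewrite 1 [← one_mul (LinearMap.det F * LinearMap.det G)] at h1
    exact (mul_right_cancel₀ hne h1).symm
  refine ⟨Module.finrank K W, ?_, Submodule.finrank_le W, ?_⟩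
  · rw [Module.finrank_pos_iff]
    exact Submodule.nontrivial_iff_ne_bot.mpr hWne
  · rw [← det_restrict_maxGen z μ hZmap]
    exact hZdet

section CFCStuff
open scoped Matrix.Norms.L2Operator
noncomputable local instance matrixCStarAlgebra {n : Type*} [Fintype n] [DecidableEq n] :
    CStarAlgebra (Matrix n n ℂ) := Matrix.instCStarAlgebra

lemma unitary_pow_eq_one_of_spectrum {n : Type*} [Fintype n] [DecidableEq n]
    (z : Matrix n n ℂ) (hz : z ∈ Matrix.unitaryGroup n ℂ) {L : ℕ}
    (hspec : ∀ μ ∈ spectrum ℂ z, μ ^ L = 1) : z ^ L = 1 := by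
  have h1 : z * star z = 1 := Matrix.mem_unitaryGroup_iff.mp hz
  have h2 : star z * z = 1 := Matrix.mem_unitaryGroup_iff'.mp hz
  haveI hnormal : IsStarNormal z := ⟨by rw [Commute, SemiconjBy, h1, h2]⟩
  calc z ^ L = cfc (· ^ L : ℂ → ℂ) z := (cfc_pow_id (R := ℂ) z L).symm
    _ = cfc (fun _ => (1:ℂ)) z := cfc_congr fun x hx => hspec x hx
    _ = 1 := cfc_const_one ℂ z

end CFCStuff

lemma card_bound_of_comm_exponent {m L : ℕ} (hL : 0 < L) {G : Type*} [Group G]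
    (hGcomm : ∀ a b : G, a * b = b * a) (ρ : G →* Matrix (Fin m) (Fin m) ℂ)
    (hinj : Function.Injective ρ) (hexp : ∀ g : G, ρ g ^ L = 1) :
    Finite G ∧ Nat.card G ≤ L ^ m := by
  classical
  set f : G → Module.End ℂ (Fin m → ℂ) := fun g => Matrix.toLinAlgEquiv' (ρ g) with hf
  have hcomm : ∀ a b : G, Commute (f a) (f b) := fun a b => by
    rw [Commute, SemiconjBy, hf]
    simp only [← map_mul, hGcomm a b]
  have hpow : ∀ g, (f g) ^ L = 1 := fun g => by
    rw [hf]; simp only [← map_pow, hexp, map_one]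
  have hLC : ((L : ℂ)) ≠ 0 := Nat.cast_ne_zero.mpr hL.ne'
  set W : (G → ℂ) → Submodule ℂ (Fin m → ℂ) :=
    fun χ => ⨅ g, (f g).maxGenEigenspace (χ g) with hWdef
  have htop : ⨆ χ : G → ℂ, W χ = ⊤ :=
    Module.End.iSup_iInf_maxGenEigenspace_eq_top_of_iSup_maxGenEigenspace_eq_top_of_commute f
      (fun a b _ => hcomm a b) (fun g => Module.End.iSup_maxGenEigenspace_eq_top _)
  have hind : iSupIndep W :=
    Module.End.independent_iInf_maxGenEigenspace_of_forall_mapsTo f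
      (fun a b φ => Module.End.mapsTo_maxGenEigenspace_of_comm (hcomm b a) φ)
  set S := {χ : G → ℂ // W χ ≠ ⊥} with hS
  haveI hSfin : Fintype S := hind.fintypeNeBotOfFiniteDimensional
  have hScard : Fintype.card S ≤ m := by
    simpa using hind.subtype_ne_bot_le_finrank
  -- scalar action
  have hact : ∀ (g : G) (χ : G → ℂ), ∀ v ∈ W χ, f g v = χ g • v := by
    intro g χ v hv
    exact maxGen_smul_action hLC (hpow g) (Submodule.mem_iInf _ |>.mp hv g)
  -- roots of unity values
  have hroot : ∀ (χ : {χ : G → ℂ // W χ ≠ ⊥}) (g : G), (χ.1 g) ^ L = 1 := by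
    intro χ g
    obtain ⟨v, hvW, hv0⟩ := Submodule.exists_mem_ne_zero_of_ne_bot χ.2
    have hiter : ∀ k : ℕ, ((f g) ^ k) v = (χ.1 g) ^ k • v := by
      intro k
      induction k with
      | zero => simp
      | succ k ih =>
        rw [pow_succ, Module.End.mul_apply, hact g χ.1 v hvW, map_smul, ih, smul_smul,
          ← pow_succ']
    have := hiter L
    rw [hpow g] at this
    simp only [Module.End.one_apply] at this
    have : ((χ.1 g) ^ L - 1) • v = 0 := by
      rw [sub_smul, one_smul, ← this]
      abel
    rcases smul_eq_zero.mp this with h | h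
    · exact sub_eq_zero.mp h
    · exact absurd h hv0
  -- the injection
  set μL := (Polynomial.nthRoots L (1 : ℂ)).toFinset with hmuL
  have hmem : ∀ (χ : S) (g : G), χ.1 g ∈ μL := by
    intro χ g
    rw [hmuL, Multiset.mem_toFinset, Polynomial.mem_nthRoots hL]
    exact hroot χ g
  set Φ : G → (S → μL) := fun g χ => ⟨χ.1 g, hmem χ g⟩ with hΦ
  have hΦinj : Function.Injective Φ := by
    intro a b hab
    have hagree : ∀ χ : G → ℂ, W χ ≠ ⊥ → χ a = χ b := by
      intro χ hχ
      have := congrArg (fun F : S → μL => (F ⟨χ, hχ⟩ : ℂ)) hab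
      simpa [hΦ] using this
    have hfeq : f a = f b := by
      have hker : ∀ χ : G → ℂ, W χ ≤ LinearMap.ker (f a - f b) := by
        intro χ
        by_cases hχ : W χ = ⊥
        · rw [hχ]; exact bot_le
        · intro v hv
          rw [LinearMap.mem_ker, LinearMap.sub_apply, hact a χ v hv, hact b χ v hv,
            hagree χ hχ, sub_self]
      have : (⊤ : Submodule ℂ (Fin m → ℂ)) ≤ LinearMap.ker (f a - f b) := by
        rw [← htop]
        exact iSup_le hker
      have hzero : f a - f b = 0 := by
        apply LinearMap.ext
        intro v
        simpa using this (Submodule.mem_top (x := v))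
      exact sub_eq_zero.mp hzero
    apply hinj
    have := congrArg (Matrix.toLinAlgEquiv' (R := ℂ) (n := Fin m)).symm hfeq
    simpa [hf] using this
  -- conclude
  haveI : Finite (S → μL) := by infer_instance
  haveI hGfin : Finite G := Finite.of_injective Φ hΦinj
  refine ⟨hGfin, ?_⟩
  have h1 : Nat.card G ≤ Nat.card (S → μL) := Nat.card_le_card_of_injective Φ hΦinj
  have h2 : Nat.card (S → μL) = Nat.card μL ^ Nat.card S := Nat.card_fun
  have h3 : Nat.card μL ≤ L := by
    rw [Nat.card_eq_fintype_card, Fintype.card_coe]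
    exact le_trans (Multiset.toFinset_card_le _) (Polynomial.card_nthRoots L 1)
  have h4 : Nat.card S ≤ m := by
    rw [Nat.card_eq_fintype_card]
    exact hScard
  calc Nat.card G ≤ Nat.card (S → μL) := h1
    _ = Nat.card μL ^ Nat.card S := h2
    _ ≤ L ^ Nat.card S := Nat.pow_le_pow_left h3 _
    _ ≤ L ^ m := Nat.pow_le_pow_right hL h4

end Auxiliary

/-- For every `m` there is `O = O(m)` such that for every subgroup `N` of `SU(m)` which is
nilpotent of nilpotency class `s ≥ 2`, the `s`-th term `N_(s)` of the lower central series of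
`N` (in Mathlib's indexing, `lowerCentralSeries N (s-1)`) is abelian, finite, and of
cardinality at most `O`. -/
theorem lcs_top_term_abelian_bounded (m : ℕ) :
    ∃ O : ℕ, ∀ (N : Subgroup (Matrix.specialUnitaryGroup (Fin m) ℂ)) (s : ℕ),
      2 ≤ s →
      Subgroup.lowerCentralSeries (⊤ : Subgroup ↥N) (s - 1) ≠ ⊥ →
      Subgroup.lowerCentralSeries (⊤ : Subgroup ↥N) s = ⊥ →
      (∀ x y : ↥(Subgroup.lowerCentralSeries (⊤ : Subgroup ↥N) (s - 1)), x * y = y * x) ∧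
        Finite ↥(Subgroup.lowerCentralSeries (⊤ : Subgroup ↥N) (s - 1)) ∧
        Nat.card ↥(Subgroup.lowerCentralSeries (⊤ : Subgroup ↥N) (s - 1)) ≤ O := by
  classical
  set L := m.factorial with hLdef
  have hL : 0 < L := m.factorial_pos
  refine ⟨L ^ m, ?_⟩
  intro N s hs2 hne hbot
  set G := ↥N with hGdef
  letI : Bracket G G := commutatorElement
  set H := Subgroup.lowerCentralSeries (⊤ : Subgroup G) (s - 1) with hHdef
  -- the embedding into matrices
  set ρ : G →* Matrix (Fin m) (Fin m) ℂ :=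
    ((Matrix.specialUnitaryGroup (Fin m) ℂ).subtype).comp N.subtype with hρdef
  have hinj : Function.Injective ρ := by
    intro a b hab
    exact Subtype.ext (Subtype.ext hab)
  -- centrality of H
  have hsucc : Subgroup.lowerCentralSeries (⊤ : Subgroup G) s = ⁅H, ⊤⁆ := by
    have h1 : s - 1 + 1 = s := by omega
    rw [hHdef, ← h1]
    rfl
  have hcentral : ∀ h ∈ H, ∀ g : G, h * g = g * h := by
    intro h hh g
    have : ⁅h, g⁆ ∈ Subgroup.lowerCentralSeries (⊤ : Subgroup G) s := by
      rw [hsucc]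
      exact Subgroup.commutator_mem_commutator hh (Subgroup.mem_top g)
    rw [hbot, Subgroup.mem_bot] at this
    exact commutatorElement_eq_one_iff_mul_comm.mp this
  have part1 : ∀ x y : ↥H, x * y = y * x := by
    intro x y
    exact Subtype.ext (hcentral x.1 x.2 y.1)
  -- generators have exponent L at matrix level
  have hHsucc : H = ⁅Subgroup.lowerCentralSeries (⊤ : Subgroup G) (s - 2), ⊤⁆ := by
    have h1 : s - 2 + 1 = s - 1 := by omega
    rw [hHdef, ← h1]
    rfl
  have hcommutator_pow : ∀ y x : G, y ∈ Subgroup.lowerCentralSeries (⊤ : Subgroup G) (s - 2) → (⁅y, x⁆ : G) ^ L = 1 := by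
    intro y x hy
    set z := (⁅y, x⁆ : G) with hzdef
    have hzH : z ∈ H := by
      rw [hHsucc]
      exact Subgroup.commutator_mem_commutator hy (Subgroup.mem_top x)
    have hzx : Commute z x := hcentral z hzH x
    have hzy : Commute z y := hcentral z hzH y
    have hrelG : y * x = z * (x * y) := by
      rw [hzdef]
      group
    -- matrix level
    have hZX : Commute (ρ z) (ρ x) := by
      rw [Commute, SemiconjBy, ← map_mul, ← map_mul, hzx]
    have hZY : Commute (ρ z) (ρ y) := by
      rw [Commute, SemiconjBy, ← map_mul, ← map_mul, hzy]
    have hrelM : ρ y * ρ x = ρ z * (ρ x * ρ y) := by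
      rw [← map_mul, ← map_mul, ← map_mul, hrelG]
    have hXunit : IsUnit (ρ x) := (Group.isUnit x).map ρ
    have hYunit : IsUnit (ρ y) := (Group.isUnit y).map ρ
    -- spectrum bound via endomorphisms
    have hspec : ∀ μ ∈ spectrum ℂ (ρ z), μ ^ L = 1 := by
      intro μ hμ
      have hμ' : μ ∈ spectrum ℂ (Matrix.toLinAlgEquiv' (ρ z)) := by
        rwa [AlgEquiv.spectrum_eq]
      obtain ⟨d, hd0, hdle, hdpow⟩ := spectrum_pow_eq_one_of_commutator
        (Matrix.toLinAlgEquiv' (ρ x)) (Matrix.toLinAlgEquiv' (ρ y))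
        (Matrix.toLinAlgEquiv' (ρ z))
        (hXunit.map _) (hYunit.map _)
        (hZX.map (Matrix.toLinAlgEquiv' (R := ℂ) (n := Fin m)))
        (hZY.map (Matrix.toLinAlgEquiv' (R := ℂ) (n := Fin m)))
        (by simpa only [map_mul] using
          congrArg (Matrix.toLinAlgEquiv' (R := ℂ) (n := Fin m)) hrelM) hμ'
      have hdm : d ≤ m := by
        rwa [Module.finrank_fin_fun] at hdle
      have hdvd : d ∣ L := Nat.dvd_factorial hd0 hdm
      obtain ⟨c, hc⟩ := hdvd
      rw [hc, pow_mul, hdpow, one_pow]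
    -- z is unitary
    have hzu : ρ z ∈ Matrix.unitaryGroup (Fin m) ℂ := (z.1.2).1
    have hmat : (ρ z) ^ L = 1 := unitary_pow_eq_one_of_spectrum (ρ z) hzu hspec
    apply hinj
    rw [map_pow, hmat, map_one]
  -- all elements of H have exponent L
  have hexpH : ∀ h ∈ H, h ^ L = 1 := by
    intro h hh
    have hh' : h ∈ Subgroup.closure { g : G | ∃ g₁ ∈ Subgroup.lowerCentralSeries (⊤ : Subgroup G) (s - 2), ∃ g₂ ∈ (⊤ : Subgroup G), ⁅g₁, g₂⁆ = g } := by
      rw [← Subgroup.commutator_def, ← hHsucc]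
      exact hh
    refine Subgroup.closure_induction (p := fun g _ => g ^ L = 1) ?_ (one_pow L) ?_ ?_ hh'
    · rintro g ⟨g₁, hg₁, g₂, -, rfl⟩
      exact hcommutator_pow g₁ g₂ hg₁
    · intro a b ha hb hpa hpb
      have haH : a ∈ H := by
        rw [hHsucc, Subgroup.commutator_def]
        exact ha
      have hcomm : Commute a b := hcentral a haH b
      rw [hcomm.mul_pow, hpa, hpb, one_mul]
    · intro a ha hpa
      rw [inv_pow, hpa, inv_one]
  -- apply the counting lemma to H
  have hcount := card_bound_of_comm_exponent (m := m) hL part1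
    (ρ.comp H.subtype)
    (fun a b hab => Subtype.ext (hinj hab))
    (fun h => by
      have : (h : G) ^ L = 1 := hexpH h.1 h.2
      rw [MonoidHom.comp_apply, ← map_pow]
      show ρ ((h : G) ^ L) = 1
      rw [this, map_one])
  exact ⟨part1, hcount.1, hcount.2⟩
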